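/- Every row and every column-group permutation sign of an (m,2)-latin quasisquare is such that ε(c) = +1 for all c ∈ LQ(m,2); i.e., the sign function is identically 1 on LQ(m,2). -/

import Mathlib

open Equiv Finset Function

/-- The `r`-th element of the `i`-th block of length `m` in `{0, …, m*n-1}`. -/
def idx (m n : ℕ) (i : Fin n) (r : Fin m) : Fin (m * n) :=
  ⟨i.val * m + r.val, by
    have h1 : i.val * m + m = (i.val + 1) * m := by ring
    have h2 : (i.val + 1) * m ≤ n * m := Nat.mul_le_mul_right m i.isLt
    have h3 : n * m = m * n := Nat.mul_comm n m
    omega⟩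

/-- A permutation of `{0, …, m*n-1}` is block-increasing if it is strictly increasing on
each of the `n` consecutive blocks of length `m`. -/
def BlockIncr (m n : ℕ) (σ : Equiv.Perm (Fin (m * n))) : Prop :=
  ∀ (i : Fin n) (r r' : Fin m), r < r' → σ (idx m n i r) < σ (idx m n i r')

instance (m n : ℕ) : DecidablePred (BlockIncr m n) := fun σ => by
  unfold BlockIncr; infer_instance

/-- The generalized pfaffian `Pf_m` of a tensor with `m*k` indices (grouped in `k` groups of
`m`), each ranging over `{0, …, m*n-1}`:
`(1/n!) Σ ε(σ_1)⋯ε(σ_k) Π_{i=1}^n M_{σ_1((i-1)m+1),…,σ_1(im),…,σ_k((i-1)m+1),…,σ_k(im)}`,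
the sum being over `k`-tuples of block-increasing permutations. -/
noncomputable def Pf (m k n : ℕ) (M : (Fin k → Fin m → Fin (m * n)) → ℚ) : ℚ :=
  (n.factorial : ℚ)⁻¹ *
    ∑ σ ∈ Finset.univ.filter (fun σ : Fin k → Equiv.Perm (Fin (m * n)) =>
        ∀ j, BlockIncr m n (σ j)),
      (∏ j, ((Equiv.Perm.sign (σ j) : ℤ) : ℚ)) *
        ∏ i : Fin n, M (fun j r => σ j (idx m n i r))

/-- The block number of position `t` in `{0, …, m*n-1}`. -/
def blkOf (m n : ℕ) (t : Fin (m * n)) : Fin n :=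
  ⟨t.val / m, Nat.div_lt_of_lt_mul t.isLt⟩

/-- The position within its block of position `t` in `{0, …, m*n-1}`. -/
def posOf (m n : ℕ) (t : Fin (m * n)) : Fin m :=
  ⟨t.val % m, by
    have hm : 0 < m := by
      rcases Nat.eq_zero_or_pos m with h | h
      · exact absurd t.isLt (by simp [h])
      · exact h
    exact Nat.mod_lt _ hm⟩

/-- The Levi-Civita (fully antisymmetric) tensor of order `m*k` and side `m*k`, with
indices grouped in `k` groups of `m`: its value is the sign of the sequence of indices
read as a permutation when the indices are pairwise distinct, and `0` otherwise. -/
noncomputable def levi (m k : ℕ) : (Fin k → Fin m → Fin (m * k)) → ℚ := fun f =>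
  if h : Function.Bijective (fun t : Fin (m * k) => f (blkOf m k t) (posOf m k t)) then
    ((Equiv.Perm.sign (Equiv.ofBijective _ h) : ℤ) : ℚ)
  else 0

/-- The hyperminor of `M` obtained by restricting the `s`-th group of `m` index slots to
the subset `I s` (of cardinality `m*ℓ`), with the induced order. -/
noncomputable def hyperminor {m k n : ℕ} (ℓ : ℕ) (M : (Fin k → Fin m → Fin (m * n)) → ℚ)
    (I : Fin k → Finset (Fin (m * n))) (h : ∀ s, (I s).card = m * ℓ) :
    (Fin k → Fin m → Fin (m * ℓ)) → ℚ :=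
  fun f => M fun j r => (((I j).orderIsoOfFin (h j)) (f j r)).1

/-- Row `ℓ` of the `(m,k)`-array built from column permutations `σ`: the entry in
column-group `j`, position `r` is `σ j ((ℓ-1)m + r)`. -/
def lqRow (m k : ℕ) (σ : Fin k → Equiv.Perm (Fin (m * k))) (ℓ : Fin k) :
    Fin (m * k) → Fin (m * k) :=
  fun t => σ (blkOf m k t) (idx m k ℓ (posOf m k t))

/-- `σ` determines an `(m,k)`-latin quasisquare: every column permutation `σ j` is
block-increasing and every row is a permutation of `{0, …, mk-1}` (each row is then
automatically block-increasing). -/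
def IsLQ (m k : ℕ) (σ : Fin k → Equiv.Perm (Fin (m * k))) : Prop :=
  (∀ j, BlockIncr m k (σ j)) ∧ ∀ ℓ : Fin k, Function.Bijective (lqRow m k σ ℓ)

instance (m k : ℕ) : DecidablePred (IsLQ m k) := fun σ => by
  unfold IsLQ lqRow; infer_instance

/-- The set of `(m,k)`-latin quasisquares. -/
noncomputable def LQ (m k : ℕ) : Finset (Fin k → Equiv.Perm (Fin (m * k))) :=
  Finset.univ.filter (IsLQ m k)

/-- The sign of an `(m,k)`-latin quasisquare: the product of the signs of the column
permutations `σ j` and of the signs of the rows. -/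
noncomputable def LQsign (m k : ℕ) (σ : Fin k → Equiv.Perm (Fin (m * k))) : ℚ :=
  if h : ∀ ℓ : Fin k, Function.Bijective (lqRow m k σ ℓ) then
    (∏ j, ((Equiv.Perm.sign (σ j) : ℤ) : ℚ)) *
      ∏ ℓ, ((Equiv.Perm.sign (Equiv.ofBijective _ (h ℓ)) : ℤ) : ℚ)
  else 0


section AuxLQ

variable {m : ℕ}

private lemma blk_lt (t : Fin (m * 2)) (ht : t.val < m) : blkOf m 2 t = 0 := by
  apply Fin.ext
  simp [blkOf, Nat.div_eq_of_lt ht]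

private lemma blk_ge (t : Fin (m * 2)) (ht : m ≤ t.val) : blkOf m 2 t = 1 := by
  apply Fin.ext
  have h2 : t.val < 2 * m := by have := t.isLt; omega
  have hm : 0 < m := by omega
  have : t.val / m = 1 :=
    Nat.div_eq_of_lt_le (by omega) (by omega)
  simpa [blkOf] using this

private lemma pos_lt (t : Fin (m * 2)) (ht : t.val < m) : (posOf m 2 t).val = t.val := by
  simp [posOf, Nat.mod_eq_of_lt ht]

private lemma pos_ge (t : Fin (m * 2)) (ht : m ≤ t.val) : (posOf m 2 t).val = t.val - m := by
  have hm : 0 < m := by have := t.isLt; omega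
  have h2 : t.val < 2 * m := by have := t.isLt; omega
  simp only [posOf]
  rw [Nat.mod_eq_sub_mod ht, Nat.mod_eq_of_lt (by omega)]

private lemma idx_zero_val (r : Fin m) : (idx m 2 0 r).val = r.val := by
  simp [idx]

private lemma idx_one_val (r : Fin m) : (idx m 2 1 r).val = m + r.val := by
  simp [idx, Nat.add_comm]

private lemma row_eq_col (σ : Fin 2 → Equiv.Perm (Fin (m * 2))) (h : IsLQ m 2 σ) :
    ∀ ℓ, lqRow m 2 σ ℓ = ⇑(σ ℓ) := by
  obtain ⟨hinc, hbij⟩ := h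
  set f : Fin m → Fin (m * 2) := fun r => σ 0 (idx m 2 1 r) with hf
  set g : Fin m → Fin (m * 2) := fun r => σ 1 (idx m 2 0 r) with hg
  -- key: f = g
  have hfmono : StrictMono f := fun r r' hrr => hinc 0 1 r r' hrr
  have hgmono : StrictMono g := fun r r' hrr => hinc 1 0 r r' hrr
  -- the "left" predicate: being in the image of block 0 of σ 0
  have coverA : ∀ t : Fin (m * 2), (∃ r, σ 0 (idx m 2 0 r) = t) ∨ (∃ r, f r = t) := by
    intro t
    obtain ⟨u, hu⟩ := (σ 0).surjective t
    by_cases hum : u.val < m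
    · left; exact ⟨⟨u.val, hum⟩, by rw [← hu]; congr 1; apply Fin.ext; simp [idx_zero_val]⟩
    · right
      refine ⟨⟨u.val - m, by have := u.isLt; omega⟩, ?_⟩
      show σ 0 (idx m 2 1 _) = t
      rw [← hu]; congr 1; apply Fin.ext; rw [idx_one_val]; simp only []; omega
  have exclA : ∀ (r r' : Fin m), σ 0 (idx m 2 0 r) ≠ f r' := by
    intro r r' heq
    have := (σ 0).injective heq
    have hv := congrArg Fin.val this
    rw [idx_zero_val, idx_one_val] at hv
    have := r.isLt; omega
  have coverB : ∀ t : Fin (m * 2), (∃ r, σ 0 (idx m 2 0 r) = t) ∨ (∃ r, g r = t) := by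
    intro t
    obtain ⟨u, hu⟩ := (hbij 0).surjective t
    by_cases hum : u.val < m
    · left
      refine ⟨⟨u.val, hum⟩, ?_⟩
      rw [← hu]
      show σ 0 _ = lqRow m 2 σ 0 u
      rw [lqRow, blk_lt u hum]
      congr 1; apply Fin.ext; rw [idx_zero_val, idx_zero_val, pos_lt u hum]
    · right
      refine ⟨⟨u.val - m, by have := u.isLt; omega⟩, ?_⟩
      rw [hg, ← hu]
      show σ 1 _ = lqRow m 2 σ 0 u
      rw [lqRow, blk_ge u (by omega)]
      congr 1; apply Fin.ext; rw [idx_zero_val, idx_zero_val, pos_ge u (by omega)]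
  have exclB : ∀ (r r' : Fin m), σ 0 (idx m 2 0 r) ≠ g r' := by
    intro r r' heq
    have h1 : lqRow m 2 σ 0 (idx m 2 0 r) = σ 0 (idx m 2 0 r) := by
      rw [lqRow, blk_lt _ (by rw [idx_zero_val]; exact r.isLt)]
      congr 1; apply Fin.ext
      rw [idx_zero_val, idx_zero_val, pos_lt _ (by rw [idx_zero_val]; exact r.isLt),
        idx_zero_val]
    have h2 : lqRow m 2 σ 0 (idx m 2 1 r') = g r' := by
      rw [lqRow, blk_ge _ (by rw [idx_one_val]; omega)]
      rw [hg]
      congr 1; apply Fin.ext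
      rw [idx_zero_val, idx_zero_val, pos_ge _ (by rw [idx_one_val]; omega), idx_one_val]
      omega
    have := (hbij 0).injective (h1.trans (heq.trans h2.symm))
    have hv := congrArg Fin.val this
    rw [idx_zero_val, idx_one_val] at hv
    have := r.isLt; omega
  have hrange : Set.range f = Set.range g := by
    ext t
    simp only [Set.mem_range]
    constructor
    · rintro ⟨r, rfl⟩
      rcases coverB (f r) with ⟨r', hr'⟩ | h
      · exact absurd hr' (exclA r' r)
      · exact h
    · rintro ⟨r, rfl⟩
      rcases coverA (g r) with ⟨r', hr'⟩ | h
      · exact absurd hr' (exclB r' r)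
      · exact h
  have hfg : f = g := (StrictMono.range_inj hfmono hgmono).mp hrange
  -- now compute the rows
  have case0 : lqRow m 2 σ 0 = ⇑(σ 0) := by
    funext t
    have hm : 0 < m := by have := t.isLt; omega
    by_cases htm : t.val < m
    · rw [lqRow, blk_lt t htm]
      congr 1; apply Fin.ext; rw [idx_zero_val, pos_lt t htm]
    · rw [lqRow, blk_ge t (by omega)]
      have h1 : σ 1 (idx m 2 0 (posOf m 2 t)) = g (posOf m 2 t) := rfl
      rw [h1, ← hfg]
      show σ 0 (idx m 2 1 (posOf m 2 t)) = σ 0 t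
      congr 1; apply Fin.ext; rw [idx_one_val, pos_ge t (by omega)]
      have := t.isLt; omega
  have case1 : lqRow m 2 σ 1 = ⇑(σ 1) := by
    funext t
    have hm : 0 < m := by have := t.isLt; omega
    by_cases htm : t.val < m
    · rw [lqRow, blk_lt t htm]
      have h1 : σ 0 (idx m 2 1 (posOf m 2 t)) = f (posOf m 2 t) := rfl
      rw [h1, hfg]
      show σ 1 (idx m 2 0 (posOf m 2 t)) = σ 1 t
      congr 1; apply Fin.ext; rw [idx_zero_val, pos_lt t htm]
    · rw [lqRow, blk_ge t (by omega)]
      congr 1; apply Fin.ext; rw [idx_one_val, pos_ge t (by omega)]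
      omega
  intro ℓ
  fin_cases ℓ
  · exact case0
  · exact case1

end AuxLQ

/-- Every `(m,2)`-latin quasisquare has sign `+1`. -/
theorem lq_two_sign_eq_one (m : ℕ) :
    ∀ σ ∈ LQ m 2, LQsign m 2 σ = 1 := by
  intro σ hσ
  have h : IsLQ m 2 σ := (Finset.mem_filter.mp hσ).2
  have hrow := row_eq_col σ h
  rw [LQsign, dif_pos h.2]
  have heq : ∀ ℓ : Fin 2, Equiv.ofBijective _ (h.2 ℓ) = σ ℓ := by
    intro ℓ
    apply Equiv.ext
    intro t
    exact congrFun (hrow ℓ) t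
  have hsq : ∀ j : Fin 2,
      ((Equiv.Perm.sign (σ j) : ℤ) : ℚ) * ((Equiv.Perm.sign (σ j) : ℤ) : ℚ) = 1 := by
    intro j
    rw [← Int.cast_mul, ← Units.val_mul, ← sq, Int.units_sq]
    norm_num
  rw [Fin.prod_univ_two, Fin.prod_univ_two, heq 0, heq 1]
  linear_combination (((Equiv.Perm.sign (σ 1) : ℤ) : ℚ) * ((Equiv.Perm.sign (σ 1) : ℤ) : ℚ)) * hsq 0 + hsq 1
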